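/- arXiv:2102.00926 — 8 statements merged into one kernel-verified Lean document; each statement's English description precedes it below -/
import Mathlib

section
/- Let N, K, M be positive natural numbers and let Z : Fin N → Finset (Fin K) be an assignment such that (Z n).card ≤ M for every server n and every dataset k ∈ Fin K is assigned to at least one server (i.e., for every k there exists n with k ∈ Z n). Then there exists an injective function s : Fin ⌈K/M⌉ → Fin N (where ⌈K/M⌉ = (K + M - 1)/M) such that the ordered tuple (s 0, s 1, …) satisfies the novelty property: for every i, the set Z (s i) \ (⋃_{j < i} Z (s j)) is nonempty. -/
noncomputable def nextServer {N K : ℕ} (hN : 0 < N) (Z : Fin N → Finset (Fin K))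
    (hcover : ∀ k : Fin K, ∃ n, k ∈ Z n) (C : Finset (Fin K)) : Fin N :=
  if h : ∃ k : Fin K, k ∉ C then (hcover h.choose).choose else ⟨0, hN⟩

lemma nextServer_spec {N K : ℕ} (hN : 0 < N) (Z : Fin N → Finset (Fin K))
    (hcover : ∀ k : Fin K, ∃ n, k ∈ Z n) (C : Finset (Fin K))
    (h : ∃ k : Fin K, k ∉ C) :
    ∃ k ∈ Z (nextServer hN Z hcover C), k ∉ C := by
  refine ⟨h.choose, ?_, h.choose_spec⟩
  simp only [nextServer, dif_pos h]
  exact (hcover h.choose).choose_spec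

noncomputable def chainC {N K : ℕ} (hN : 0 < N) (Z : Fin N → Finset (Fin K))
    (hcover : ∀ k : Fin K, ∃ n, k ∈ Z n) : ℕ → Finset (Fin K)
  | 0 => ∅
  | i + 1 => chainC hN Z hcover i ∪ Z (nextServer hN Z hcover (chainC hN Z hcover i))

noncomputable def chainG {N K : ℕ} (hN : 0 < N) (Z : Fin N → Finset (Fin K))
    (hcover : ∀ k : Fin K, ∃ n, k ∈ Z n) (i : ℕ) : Fin N :=
  nextServer hN Z hcover (chainC hN Z hcover i)

lemma chainC_eq_biUnion {N K : ℕ} (hN : 0 < N) (Z : Fin N → Finset (Fin K))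
    (hcover : ∀ k : Fin K, ∃ n, k ∈ Z n) (i : ℕ) :
    chainC hN Z hcover i = (Finset.range i).biUnion (fun j => Z (chainG hN Z hcover j)) := by
  induction i with
  | zero => simp [chainC]
  | succ i ih =>
      rw [Finset.range_add_one]
      simp only [chainC, chainG, ih, Finset.biUnion_insert]
      rw [Finset.union_comm]

lemma chainC_card_le {N K M : ℕ} (hN : 0 < N) (Z : Fin N → Finset (Fin K))
    (hcover : ∀ k : Fin K, ∃ n, k ∈ Z n) (hZcard : ∀ n, (Z n).card ≤ M) (i : ℕ) :
    (chainC hN Z hcover i).card ≤ i * M := by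
  induction i with
  | zero => simp [chainC]
  | succ i ih =>
      calc (chainC hN Z hcover (i + 1)).card
          ≤ (chainC hN Z hcover i).card
            + (Z (nextServer hN Z hcover (chainC hN Z hcover i))).card :=
            Finset.card_union_le _ _
        _ ≤ i * M + M := Nat.add_le_add ih (hZcard _)
        _ = (i + 1) * M := by ring

lemma chainC_exists_notMem {N K M : ℕ} (hN : 0 < N) (Z : Fin N → Finset (Fin K))
    (hcover : ∀ k : Fin K, ∃ n, k ∈ Z n) (hZcard : ∀ n, (Z n).card ≤ M) (i : ℕ)
    (hi : i * M < K) : ∃ k : Fin K, k ∉ chainC hN Z hcover i := by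
  by_contra h
  push_neg at h
  have : chainC hN Z hcover i = Finset.univ := Finset.eq_univ_iff_forall.mpr h
  have hcard := chainC_card_le hN Z hcover hZcard i
  rw [this] at hcard
  simp only [Finset.card_univ, Fintype.card_fin] at hcard
  omega

/-- Given an assignment `Z` of at most `M` datasets per server that covers all
`K` datasets, there is an ordered tuple of `⌈K/M⌉` distinct servers satisfying the novelty
property. -/
theorem exists_novelty_chain_of_cover (N K M : ℕ) (hN : 0 < N) (hK : 0 < K) (hM : 0 < M)
    (Z : Fin N → Finset (Fin K))
    (hZcard : ∀ n, (Z n).card ≤ M)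
    (hcover : ∀ k : Fin K, ∃ n, k ∈ Z n) :
    ∃ s : Fin ((K + M - 1) / M) → Fin N, Function.Injective s ∧
      ∀ i, (Z (s i) \
        (Finset.univ.filter (fun j => j < i)).biUnion (fun j => Z (s j))).Nonempty := by
  set T := (K + M - 1) / M with hT
  have hlt : ∀ i : ℕ, i < T → i * M < K := by
    intro i hi
    have h1 : (i + 1) * M ≤ T * M := Nat.mul_le_mul_right M hi
    have h2 : T * M ≤ K + M - 1 := Nat.div_mul_le_self _ _
    have h3 := le_trans h1 h2
    rw [add_mul, one_mul] at h3
    omega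
  refine ⟨fun i => chainG hN Z hcover i.val, ?_, ?_⟩
  · -- injectivity
    have key : ∀ i j : Fin T, i < j →
        chainG hN Z hcover i.val ≠ chainG hN Z hcover j.val := by
      intro i j hlt' hij
      obtain ⟨k, hkZ, hkC⟩ := nextServer_spec hN Z hcover (chainC hN Z hcover j.val)
        (chainC_exists_notMem hN Z hcover hZcard j.val (hlt j.val j.isLt))
      apply hkC
      rw [chainC_eq_biUnion]
      apply Finset.mem_biUnion.mpr
      refine ⟨i.val, Finset.mem_range.mpr hlt', ?_⟩
      rw [hij]; exact hkZ
    intro i j hij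
    rcases lt_trichotomy i j with h | h | h
    · exact absurd hij (key i j h)
    · exact h
    · exact absurd hij.symm (key j i h)
  · -- novelty
    intro i
    have hbi : (Finset.univ.filter (fun j => j < i)).biUnion
        (fun j : Fin T => Z (chainG hN Z hcover j.val)) = chainC hN Z hcover i.val := by
      rw [chainC_eq_biUnion]
      ext x
      simp only [Finset.mem_biUnion, Finset.mem_filter, Finset.mem_univ, true_and,
        Finset.mem_range]
      constructor
      · rintro ⟨j, hj, hx⟩; exact ⟨j.val, hj, hx⟩
      · rintro ⟨m, hm, hx⟩
        exact ⟨⟨m, lt_trans hm i.isLt⟩, hm, hx⟩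
    rw [hbi]
    obtain ⟨k, hkZ, hkC⟩ := nextServer_spec hN Z hcover (chainC hN Z hcover i.val)
      (chainC_exists_notMem hN Z hcover hZcard i.val (hlt i.val i.isLt))
    exact ⟨k, Finset.mem_sdiff.mpr ⟨hkZ, hkC⟩⟩
end

section
/- Let N and N_r be natural numbers with 1 ≤ N_r ≤ N. For each natural number m, let Z' m := (Finset.range (N − N_r + 1)).image (fun j => ((m + j : ℕ) : ZMod N)) be the set assigned to server m under the cyclic assignment. Then for all natural numbers n, m with n < m < N_r, one has (n : ZMod N) ∈ Z' n and (n : ZMod N) ∉ Z' m. Consequently, the ordered tuple of servers (N_r − 1, N_r − 2, …, 1, 0) satisfies the novelty property: for each i, server N_r − 1 − i has the group with index N_r − 1 − i, which is not assigned to any of the servers N_r − 1, …, N_r − i. -/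
/-- Under the cyclic assignment with window size `N - N_r + 1`, the group with
index `n` is assigned to server `n` but not to any server `m` with `n < m < N_r`. -/
theorem cyclic_assignment_novelty (N Nr : ℕ) (h1 : 1 ≤ Nr) (h2 : Nr ≤ N)
    (Z' : ℕ → Finset (ZMod N))
    (hZ' : ∀ m : ℕ, Z' m = (Finset.range (N - Nr + 1)).image (fun j => ((m + j : ℕ) : ZMod N))) :
    ∀ n m : ℕ, n < m → m < Nr →
      (n : ZMod N) ∈ Z' n ∧ (n : ZMod N) ∉ Z' m := by
  intro n m hnm hmNr
  constructor
  · rw [hZ']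
    exact Finset.mem_image.mpr ⟨0, Finset.mem_range.mpr (Nat.succ_pos _), by simp⟩
  · rw [hZ']
    intro hmem
    obtain ⟨j, hj, hje⟩ := Finset.mem_image.mp hmem
    rw [Finset.mem_range, Nat.lt_succ_iff] at hj
    have hmod : (m + j) % N = n % N := (ZMod.natCast_eq_natCast_iff' _ _ _).mp hje
    have hlt : m + j < N := by omega
    have hn : n < N := by omega
    rw [Nat.mod_eq_of_lt hlt, Nat.mod_eq_of_lt hn] at hmod
    omega
end

section
/- Let N, K, M, M' be natural numbers with K ≥ 1, 1 ≤ M', M' < N, K < 2 * M and M < K. Let Z : Fin N → Finset (Fin K) be an assignment such that (Z n).card = M for every server n and every dataset k ∈ Fin K is assigned to exactly M' servers (i.e., (Finset.univ.filter (fun n => k ∈ Z n)).card = M' for every k). Then there exist three pairwise distinct servers n₁, n₂, n₃ ∈ Fin N such that the finsets Z n₁, Z n₂, Z n₃ are pairwise distinct. -/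
/-- In a biregular assignment where each server obtains exactly `M` datasets,
`K/2 < M < K`, and each dataset is assigned to exactly `M'` servers with `M' < N`, there
exist three pairwise distinct servers with pairwise distinct sets of assigned datasets. -/
theorem exists_three_servers_distinct_sets (N K M M' : ℕ) (hK : 1 ≤ K)
    (hM'1 : 1 ≤ M') (hM'N : M' < N) (hKM : K < 2 * M) (hMK : M < K)
    (Z : Fin N → Finset (Fin K))
    (hZcard : ∀ n, (Z n).card = M)
    (hreg : ∀ k : Fin K, (Finset.univ.filter (fun n => k ∈ Z n)).card = M') :
    ∃ n₁ n₂ n₃ : Fin N, n₁ ≠ n₂ ∧ n₁ ≠ n₃ ∧ n₂ ≠ n₃ ∧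
      Z n₁ ≠ Z n₂ ∧ Z n₁ ≠ Z n₃ ∧ Z n₂ ≠ Z n₃ := by
  have hN : 0 < N := lt_of_le_of_lt (Nat.zero_le M') hM'N
  have n₁ : Fin N := ⟨0, hN⟩
  -- helper: if every server's set is Z a or Z b, contradiction
  have key : ∀ a b : Fin N, (∀ n, Z n = Z a ∨ Z n = Z b) → False := by
    intro a b hab
    have hinter : 0 < (Z a ∩ Z b).card := by
      have h1 := Finset.card_inter_add_card_union (Z a) (Z b)
      have h2 : (Z a ∪ Z b).card ≤ K := by
        calc (Z a ∪ Z b).card ≤ (Finset.univ : Finset (Fin K)).card :=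
              Finset.card_le_card (Finset.subset_univ _)
          _ = K := by simp
      have := hZcard a; have := hZcard b
      omega
    obtain ⟨k, hk⟩ := Finset.card_pos.mp hinter
    have hka : k ∈ Z a := (Finset.mem_inter.mp hk).1
    have hkb : k ∈ Z b := (Finset.mem_inter.mp hk).2
    have hall : ∀ n, k ∈ Z n := by
      intro n; rcases hab n with h | h <;> rw [h] <;> assumption
    have : (Finset.univ.filter (fun n => k ∈ Z n)).card = N := by
      rw [Finset.filter_true_of_mem (fun n _ => hall n)]
      simp
    have := hreg k
    omega
  by_cases h2 : ∃ n₂, Z n₂ ≠ Z n₁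
  · obtain ⟨n₂, hn₂⟩ := h2
    by_cases h3 : ∃ n₃, Z n₃ ≠ Z n₁ ∧ Z n₃ ≠ Z n₂
    · obtain ⟨n₃, h31, h32⟩ := h3
      refine ⟨n₁, n₂, n₃, ?_, ?_, ?_, fun h => hn₂ h.symm, fun h => h31 h.symm, fun h => h32 h.symm⟩
      · rintro rfl; exact hn₂ rfl
      · rintro rfl; exact h31 rfl
      · rintro rfl; exact h32 rfl
    · push_neg at h3
      exact absurd (fun n => (em (Z n = Z n₁)).imp id (h3 n)) (key n₁ n₂)
  · push_neg at h2
    exact absurd (fun n => Or.inl (h2 n)) (key n₁ n₁)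
end

section
/- Let N, K, M, M' be natural numbers with K ≥ 1, let g := Nat.gcd N M' and a := M' / g, and let b be a natural number. Assume a ≥ 3, N = (2 * a − 1 + a * b) * g, and N * M = K * M'. Let Z : Fin N → Finset (Fin K) be an assignment such that (Z n).card = M for every server n and every dataset k ∈ Fin K is assigned to exactly M' servers. Then there exists an injective function s : Fin (b + 3) → Fin N such that for every i, the set Z (s i) \ (⋃_{j < i} Z (s j)) is nonempty; i.e., there is an ordered tuple of b + 3 distinct servers satisfying the novelty property. -/
open Finset

namespace Novelty

variable {N K : ℕ} (Z : Fin N → Finset (Fin K))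

def U (l : List (Fin N)) : Finset (Fin K) := l.toFinset.biUnion Z

def Ch : List (Fin N) → Prop
  | [] => True
  | x :: xs => Ch xs ∧ (Z x \ U Z xs).Nonempty

lemma ch_nil : Ch Z [] := by simp [Ch]

lemma ch_cons {x xs} : Ch Z (x :: xs) ↔ Ch Z xs ∧ (Z x \ U Z xs).Nonempty := Iff.rfl

lemma mem_U {k l} : k ∈ U Z l ↔ ∃ y ∈ l, k ∈ Z y := by simp [U]

lemma U_cons (x : Fin N) (xs : List (Fin N)) : U Z (x :: xs) = Z x ∪ U Z xs := by
  simp [U]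

lemma zsubU {x l} (hx : x ∈ l) : Z x ⊆ U Z l := fun k hk => (mem_U Z).2 ⟨x, hx, hk⟩

lemma ch_nodup {l} (h : Ch Z l) : l.Nodup := by
  induction l with
  | nil => simp
  | cons x xs ih =>
    obtain ⟨h1, h2⟩ := (ch_cons Z).1 h
    refine List.nodup_cons.2 ⟨fun hx => ?_, ih h1⟩
    obtain ⟨k, hk⟩ := h2
    exact (Finset.mem_sdiff.1 hk).2 (zsubU Z hx (Finset.mem_sdiff.1 hk).1)

lemma card_U_le {M : ℕ} {l} (hZ : ∀ n, (Z n).card = M) : (U Z l).card ≤ l.length * M := by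
  calc (U Z l).card ≤ ∑ y ∈ l.toFinset, (Z y).card := Finset.card_biUnion_le
  _ = l.toFinset.card * M := by
      rw [Finset.sum_congr rfl (fun y _ => hZ y), Finset.sum_const, smul_eq_mul]
  _ ≤ l.length * M := Nat.mul_le_mul_right M l.toFinset_card_le

lemma ch_get {l} (h : Ch Z l) : ∀ p (hp : p < l.length),
    (Z (l.get ⟨p, hp⟩) \ U Z (l.drop (p+1))).Nonempty := by
  induction l with
  | nil => intro p hp; simp at hp
  | cons x xs ih =>
    intro p hp
    cases p with
    | zero => simpa using ((ch_cons Z).1 h).2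
    | succ q => simpa using ih ((ch_cons Z).1 h).1 q (by simpa using hp)

set_option maxHeartbeats 1000000 in
lemma final {b : ℕ} (l : List (Fin N)) (hch : Ch Z l) (hlen : l.length = b + 3) :
    ∃ s : Fin (b + 3) → Fin N, Function.Injective s ∧
      ∀ i, (Z (s i) \
        (Finset.univ.filter (fun j => j < i)).biUnion (fun j => Z (s j))).Nonempty := by
  refine ⟨fun i => l.get ⟨b + 2 - i.val, by omega⟩, ?_, ?_⟩
  · intro i j hij
    have h1 := (ch_nodup Z hch).get_inj_iff.mp hij
    have h2 : b + 2 - i.val = b + 2 - j.val := by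
      simpa using congrArg Fin.val h1
    have hi := i.isLt
    have hj := j.isLt
    exact Fin.ext (by omega)
  · intro i
    have hne := ch_get Z hch (b + 2 - i.val) (by omega)
    refine hne.mono (Finset.sdiff_subset_sdiff (Finset.Subset.refl _) ?_)
    intro k hk
    rw [Finset.mem_biUnion] at hk
    obtain ⟨j, hj, hkj⟩ := hk
    have hji : j.val < i.val := by simpa using hj
    apply (mem_U Z).2
    have hile := i.isLt
    refine ⟨l.get ⟨b + 2 - j.val, by omega⟩, ?_, hkj⟩
    have hq : (b + 2 - i.val + 1) + (b + 2 - j.val - (b + 2 - i.val + 1)) = b + 2 - j.val := by omega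
    have hlt2 : b + 2 - j.val - (b + 2 - i.val + 1) < (l.drop (b + 2 - i.val + 1)).length := by
      rw [List.length_drop]; omega
    have := List.getElem_drop' (xs := l) (i := b + 2 - ↑i + 1)
      (j := b + 2 - ↑j - (b + 2 - ↑i + 1)) (h := by omega)
    rw [List.get_eq_getElem]
    have h4 : l[b + 2 - j.val]'(by omega) =
        (l.drop (b + 2 - i.val + 1))[b + 2 - j.val - (b + 2 - i.val + 1)]'hlt2 := by
      rw [← this]
      congr 1
      omega
    rw [h4]
    exact List.getElem_mem hlt2

end Novelty

open Novelty


/-- Lemma 4 of the paper: when `N = (2a - 1 + a*b) * gcd(N, M')` with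
`a = M'/gcd(N, M') ≥ 3`, every biregular assignment admits an ordered tuple of `b + 3`
distinct servers satisfying the novelty property. -/
theorem exists_novelty_chain_b_add_three (N K M M' b : ℕ) (hK : 1 ≤ K)
    (ha : 3 ≤ M' / Nat.gcd N M')
    (hN : N = (2 * (M' / Nat.gcd N M') - 1 + (M' / Nat.gcd N M') * b) * Nat.gcd N M')
    (hNM : N * M = K * M')
    (Z : Fin N → Finset (Fin K))
    (hZcard : ∀ n, (Z n).card = M)
    (hreg : ∀ k : Fin K, (Finset.univ.filter (fun n => k ∈ Z n)).card = M') :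
    ∃ s : Fin (b + 3) → Fin N, Function.Injective s ∧
      ∀ i, (Z (s i) \
        (Finset.univ.filter (fun j => j < i)).biUnion (fun j => Z (s j))).Nonempty := by
  classical
  by_contra hcon
  -- ARITHMETIC SETUP
  set g := Nat.gcd N M' with hg_def
  set a := M' / g with ha_def
  have hM' : 0 < M' := by
    rcases Nat.eq_zero_or_pos M' with h0 | h
    · exfalso
      have : a = 0 := by rw [ha_def, h0, Nat.zero_div]
      omega
    · exact h
  have hg : 0 < g := Nat.gcd_pos_of_pos_right N hM'
  have hag : a * g = M' := Nat.div_mul_cancel (Nat.gcd_dvd_right N M')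
  obtain ⟨a1, ha1⟩ : ∃ a1, a = a1 + 1 := ⟨a - 1, by omega⟩
  have ha1ge : 2 ≤ a1 := by omega
  have he : 2 * a - 1 + a * b = 2 * a1 + 1 + (a1 + 1) * b := by
    rw [ha1]
    have h1 : 2 * (a1 + 1) - 1 = 2 * a1 + 1 := by omega
    rw [h1]
  have hN' : N = (2 * a1 + 1 + (a1 + 1) * b) * g := by rw [hN, he]
  have key : (2 * a1 + 1 + (a1 + 1) * b) * M = K * (a1 + 1) := by
    have h2 : ((2 * a1 + 1 + (a1 + 1) * b) * M) * g = (K * (a1 + 1)) * g := by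
      calc ((2 * a1 + 1 + (a1 + 1) * b) * M) * g
          = ((2 * a1 + 1 + (a1 + 1) * b) * g) * M := by ring
        _ = N * M := by rw [← hN']
        _ = K * M' := hNM
        _ = K * ((a1 + 1) * g) := by rw [← hag, ha1]
        _ = (K * (a1 + 1)) * g := by ring
    exact Nat.eq_of_mul_eq_mul_right hg h2
  have hMpos : 0 < M := by
    rcases Nat.eq_zero_or_pos M with h0 | h
    · exfalso
      rw [h0, mul_zero] at key
      rcases Nat.mul_eq_zero.1 key.symm with h | h <;> omega
    · exact h
  have h3 : (a1 + 1) * ((b + 2) * M) = (a1 + 1) * K + M := by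
    calc (a1 + 1) * ((b + 2) * M) = (2 * a1 + 1 + (a1 + 1) * b) * M + M := by ring
      _ = K * (a1 + 1) + M := by rw [key]
      _ = (a1 + 1) * K + M := by ring
  have hKle : K ≤ (b + 2) * M := by
    have h4 : (a1 + 1) * K ≤ (a1 + 1) * ((b + 2) * M) := by
      rw [h3]; exact Nat.le_add_right _ _
    exact Nat.le_of_mul_le_mul_left h4 (by omega)
  set c := (b + 2) * M - K with hc_def
  have hc : (b + 2) * M = K + c := (Nat.add_sub_cancel' hKle).symm
  have hac : (a1 + 1) * c = M := by
    have h4 : (a1 + 1) * K + (a1 + 1) * c = (a1 + 1) * K + M := by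
      calc (a1 + 1) * K + (a1 + 1) * c = (a1 + 1) * (K + c) := by ring
        _ = (a1 + 1) * ((b + 2) * M) := by rw [← hc]
        _ = (a1 + 1) * K + M := h3
    exact Nat.add_left_cancel h4
  have hcpos : 0 < c := by
    rcases Nat.eq_zero_or_pos c with h0 | h
    · rw [h0, mul_zero] at hac; omega
    · exact h
  have h2c : (b + 1) * M + 2 * c ≤ K := by
    have h5 : (a1 + 1) * ((b + 1) * M + 2 * c) ≤ (a1 + 1) * K := by
      calc (a1 + 1) * ((b + 1) * M + 2 * c)
          = ((a1 + 1) * b) * M + (a1 + 1) * M + 2 * ((a1 + 1) * c) := by ring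
        _ = ((a1 + 1) * b) * M + (a1 + 1) * M + 2 * M := by rw [hac]
        _ = ((a1 + 1) * b) * M + (a1 + 3) * M := by ring
        _ ≤ ((a1 + 1) * b) * M + (2 * a1 + 1) * M := by
            have h6 : a1 + 3 ≤ 2 * a1 + 1 := by omega
            exact Nat.add_le_add_left (Nat.mul_le_mul_right M h6) _
        _ = (2 * a1 + 1 + (a1 + 1) * b) * M := by ring
        _ = K * (a1 + 1) := key
        _ = (a1 + 1) * K := by ring
    exact Nat.le_of_mul_le_mul_left h5 (by omega)
  have hlt : (b + 1) * M < K :=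
    Nat.lt_of_lt_of_le (Nat.lt_add_of_pos_right (by omega)) h2c
  have hNM' : N + g = (b + 2) * M' := by
    calc N + g = (2 * a1 + 1 + (a1 + 1) * b) * g + g := by rw [← hN']
      _ = ((b + 2) * (a1 + 1)) * g := by ring
      _ = (b + 2) * ((a1 + 1) * g) := by ring
      _ = (b + 2) * M' := by rw [← ha1, hag]
  -- COMBINATORIAL PART
  have Hmax : ∀ l, Ch Z l → l.length ≠ b + 3 := fun l hch hlen => hcon (final Z l hch hlen)
  -- extension when union is not everything
  have ext1 : ∀ l, Ch Z l → U Z l ≠ univ → ∃ x, Ch Z (x :: l) := by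
    intro l hch hne
    have hex : ∃ k, k ∉ U Z l := by
      by_contra h
      push_neg at h
      exact hne (Finset.eq_univ_iff_forall.2 h)
    obtain ⟨k, hk⟩ := hex
    have hfil : (univ.filter (fun n => k ∈ Z n)).Nonempty := by
      rw [← Finset.card_pos, hreg k]; exact hM'
    obtain ⟨x, hx⟩ := hfil
    have hkx : k ∈ Z x := (Finset.mem_filter.1 hx).2
    exact ⟨x, (ch_cons Z).2 ⟨hch, ⟨k, Finset.mem_sdiff.2 ⟨hkx, hk⟩⟩⟩⟩
  have ext_small : ∀ l, Ch Z l → l.length ≤ b + 1 → ∃ x, Ch Z (x :: l) := by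
    intro l hch hlen
    apply ext1 l hch
    intro hUuniv
    have h1 : (U Z l).card ≤ (b + 1) * M :=
      le_trans (card_U_le Z hZcard) (Nat.mul_le_mul_right M hlen)
    rw [hUuniv, Finset.card_univ, Fintype.card_fin] at h1
    omega
  have ext_many : ∀ d l, Ch Z l → l.length + d ≤ b + 2 →
      ∃ l', Ch Z l' ∧ l'.length = l.length + d ∧ ∀ x ∈ l, x ∈ l' := by
    intro d
    induction d with
    | zero => intro l hch _; exact ⟨l, hch, by omega, fun x h => h⟩
    | succ d ih =>
      intro l hch hlen
      obtain ⟨x, hx⟩ := ext_small l hch (by omega)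
      obtain ⟨l', h1, h2, h3⟩ := ih (x :: l) hx (by simp only [List.length_cons]; omega)
      refine ⟨l', h1, ?_, fun y hy => h3 y (List.mem_cons_of_mem x hy)⟩
      simp only [List.length_cons] at h2
      omega
  have cover : ∀ l, Ch Z l → l.length = b + 2 → U Z l = univ := by
    intro l hch hlen
    by_contra hne
    obtain ⟨x, hx⟩ := ext1 l hch hne
    exact Hmax (x :: l) hx (by simp [hlen])
  -- F4 : two chain members sharing W force |W| ≤ c
  have F4 : ∀ l, Ch Z l → l.length = b + 2 → ∀ x ∈ l, ∀ y ∈ l, x ≠ y →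
      ∀ W : Finset (Fin K), W ⊆ Z x → W ⊆ Z y → W.card ≤ c := by
    intro l hch hlen x hx y hy hxy W hWx hWy
    have huniv := cover l hch hlen
    have hKeq : K = (U Z l).card := by rw [huniv, Finset.card_univ, Fintype.card_fin]
    have hScard : l.toFinset.card = b + 2 := by
      rw [List.toFinset_card_of_nodup (ch_nodup Z hch), hlen]
    have hxS : x ∈ l.toFinset := List.mem_toFinset.2 hx
    have hyS : y ∈ l.toFinset.erase x :=
      Finset.mem_erase.2 ⟨fun h => hxy h.symm, List.mem_toFinset.2 hy⟩
    set B := (l.toFinset.erase x).biUnion Z with hB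
    have hUB : U Z l = Z x ∪ B := by
      ext k
      simp only [hB, mem_U Z, Finset.mem_union, Finset.mem_biUnion, Finset.mem_erase,
        List.mem_toFinset]
      constructor
      · rintro ⟨y, hyl, hky⟩
        by_cases hyx : y = x
        · exact Or.inl (hyx ▸ hky)
        · exact Or.inr ⟨y, ⟨hyx, hyl⟩, hky⟩
      · rintro (h | ⟨y, ⟨-, hyl⟩, hky⟩)
        · exact ⟨x, hx, h⟩
        · exact ⟨y, hyl, hky⟩
    have hWB : W ⊆ B := hWy.trans (Finset.subset_biUnion_of_mem Z hyS)
    have hBcard : B.card ≤ (b + 1) * M := by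
      calc B.card ≤ ∑ s ∈ l.toFinset.erase x, (Z s).card := Finset.card_biUnion_le
        _ = (l.toFinset.erase x).card * M := by
            rw [Finset.sum_congr rfl fun s _ => hZcard s, Finset.sum_const, smul_eq_mul]
        _ = (b + 1) * M := by
            rw [Finset.card_erase_of_mem hxS, hScard]
            congr 1
    have h1 : (Z x \ B).card + B.card = (Z x ∪ B).card := Finset.card_sdiff_add_card (Z x) B
    have h2 : (Z x \ B).card ≤ (Z x \ W).card :=
      Finset.card_le_card (Finset.sdiff_subset_sdiff (Finset.Subset.refl _) hWB)
    have h3 : (Z x \ W).card + W.card = (Z x).card :=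
      Finset.card_sdiff_add_card_eq_card hWx
    have h4 : (Z x).card = M := hZcard x
    have h5 : K = (Z x ∪ B).card := hKeq.trans (congrArg Finset.card hUB)
    have h6 : (b + 2) * M = (b + 1) * M + M := by ring
    linarith [hc]
  -- block construction from a chain of length b+1
  have blk : ∀ l, Ch Z l → l.length = b + 1 →
      ∃ (W : Finset (Fin K)) (T : Finset (Fin N)),
        2 * c ≤ W.card ∧ T.card = M' ∧ (∀ s, s ∈ T ↔ (Z s ∩ W).Nonempty) ∧
        (∀ s ∈ T, W ⊆ Z s) ∧ (∀ s ∈ T, s ∉ l) ∧ (∀ s ∈ T, Ch Z (s :: l)) := by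
    intro l hch hlen
    set W := (U Z l)ᶜ with hW
    have hUWcard : (U Z l).card + W.card = K := by
      rw [hW, Finset.card_add_card_compl, Fintype.card_fin]
    have hWcard : 2 * c ≤ W.card := by
      have h1 : (U Z l).card ≤ (b + 1) * M := by
        have := card_U_le Z hZcard (l := l); rwa [hlen] at this
      linarith [h2c]
    have hext : ∀ s, (Z s ∩ W).Nonempty → (W ⊆ Z s ∧ s ∉ l ∧ Ch Z (s :: l)) := by
      intro s hs
      obtain ⟨k, hk⟩ := hs
      have hkZ : k ∈ Z s := (Finset.mem_inter.1 hk).1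
      have hkW : k ∉ U Z l := by
        have := (Finset.mem_inter.1 hk).2
        rwa [hW, Finset.mem_compl] at this
      have hsl : s ∉ l := fun h => hkW (zsubU Z h hkZ)
      have hch' : Ch Z (s :: l) := (ch_cons Z).2 ⟨hch, ⟨k, Finset.mem_sdiff.2 ⟨hkZ, hkW⟩⟩⟩
      have hcov : U Z (s :: l) = univ := cover (s :: l) hch' (by simp [hlen])
      refine ⟨?_, hsl, hch'⟩
      intro w hw
      have hwl : w ∉ U Z l := by rwa [hW, Finset.mem_compl] at hw
      have hwu : w ∈ U Z (s :: l) := by rw [hcov]; exact Finset.mem_univ w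
      rw [U_cons] at hwu
      rcases Finset.mem_union.1 hwu with h | h
      · exact h
      · exact absurd h hwl
    refine ⟨W, univ.filter (fun s => (Z s ∩ W).Nonempty), hWcard, ?_, ?_, ?_, ?_, ?_⟩
    · -- card = M'
      have hWne : W.Nonempty := by rw [← Finset.card_pos]; omega
      obtain ⟨k0, hk0⟩ := hWne
      have hTeq : univ.filter (fun s => (Z s ∩ W).Nonempty) = univ.filter (fun s => k0 ∈ Z s) := by
        ext s
        simp only [Finset.mem_filter, Finset.mem_univ, true_and]
        constructor
        · intro hs; exact (hext s hs).1 hk0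
        · intro hs; exact ⟨k0, Finset.mem_inter.2 ⟨hs, hk0⟩⟩
      rw [hTeq]; exact hreg k0
    · intro s; simp only [Finset.mem_filter, Finset.mem_univ, true_and]
    · intro s hs
      exact (hext s (Finset.mem_filter.1 hs).2).1
    · intro s hs
      exact (hext s (Finset.mem_filter.1 hs).2).2.1
    · intro s hs
      exact (hext s (Finset.mem_filter.1 hs).2).2.2
  -- main induction building disjoint blocks
  have blocks : ∀ m, m ≤ b + 2 →
      ∃ (Ts : Fin m → Finset (Fin N)) (Ws : Fin m → Finset (Fin K)),
        (∀ i, (Ts i).card = M') ∧ (∀ i j, i ≠ j → Disjoint (Ts i) (Ts j)) ∧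
        (∀ i, 2 * c ≤ (Ws i).card) ∧ (∀ i s, s ∈ Ts i ↔ (Z s ∩ Ws i).Nonempty) ∧
        (∀ i s, s ∈ Ts i → Ws i ⊆ Z s) := by
    intro m
    induction m with
    | zero =>
      intro _
      exact ⟨fun i => i.elim0, fun i => i.elim0, fun i => i.elim0, fun i => i.elim0,
        fun i => i.elim0, fun i => i.elim0, fun i => i.elim0⟩
    | succ m ih =>
      intro hm
      obtain ⟨Ts, Ws, hTcard, hdisj, hWcard, hchar, hWsub⟩ := ih (by omega)
      have hTne : ∀ i, (Ts i).Nonempty := fun i => by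
        rw [← Finset.card_pos, hTcard]; exact hM'
      choose t ht using hTne
      have hWne : ∀ i, (Ws i).Nonempty := fun i => by
        rw [← Finset.card_pos]; have := hWcard i; omega
      have hWt : ∀ i, Ws i ⊆ Z (t i) := fun i => hWsub i (t i) (ht i)
      have hsep : ∀ i j : Fin m, i ≠ j → ∀ k ∈ Ws i, k ∉ Z (t j) := by
        intro i j hij k hk hkz
        have hmem : t j ∈ Ts i := (hchar i (t j)).2 ⟨k, Finset.mem_inter.2 ⟨hkz, hk⟩⟩
        exact Finset.disjoint_left.1 (hdisj i j hij) hmem (ht j)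
      -- transversal chain
      have trans_chain : ∀ is : List (Fin m), is.Nodup → Ch Z (is.map t) := by
        intro is
        induction is with
        | nil => intro _; exact ch_nil Z
        | cons i is ihh =>
          intro hnd
          have hnd' := List.nodup_cons.1 hnd
          refine (ch_cons Z).2 ⟨ihh hnd'.2, ?_⟩
          obtain ⟨k, hk⟩ := hWne i
          refine ⟨k, Finset.mem_sdiff.2 ⟨hWt i hk, ?_⟩⟩
          intro hkU
          obtain ⟨y, hy, hky⟩ := (mem_U Z).1 hkU
          obtain ⟨j, hj, rfl⟩ := List.mem_map.1 hy
          have hij : i ≠ j := by rintro rfl; exact hnd'.1 hj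
          exact hsep i j hij k hk hky
      have hchL : Ch Z ((List.finRange m).map t) :=
        trans_chain (List.finRange m) (List.nodup_finRange m)
      have hlenL : ((List.finRange m).map t).length = m := by simp
      obtain ⟨l', hch', hlen', hsub'⟩ := ext_many (b + 1 - m) _ hchL (by rw [hlenL]; omega)
      have hlen'' : l'.length = b + 1 := by rw [hlen', hlenL]; omega
      obtain ⟨W', T', hW'card, hT'card, hchar', hW'sub, hT'notin, hT'ch⟩ := blk l' hch' hlen''
      have hdisj' : ∀ i, Disjoint (Ts i) T' := by
        intro i
        by_contra hnd
        obtain ⟨u, huT, huT'⟩ := Finset.not_disjoint_iff.1 hnd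
        have hchu : Ch Z (u :: l') := hT'ch u huT'
        have hlenu : (u :: l').length = b + 2 := by simp [hlen'']
        have htiL : t i ∈ l' :=
          hsub' (t i) (List.mem_map.2 ⟨i, List.mem_finRange i, rfl⟩)
        have htl : t i ∈ u :: l' := List.mem_cons_of_mem u htiL
        have hul : u ∈ u :: l' := List.mem_cons_self (a := u) (l := l')
        have hneq : u ≠ t i := fun h => hT'notin u huT' (h ▸ htiL)
        have hWc := F4 (u :: l') hchu hlenu u hul (t i) htl hneq (Ws i)
          (hWsub i u huT) (hWt i)
        have := hWcard i
        omega
      refine ⟨fun i => if h : i.val < m then Ts ⟨i.val, h⟩ else T',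
        fun i => if h : i.val < m then Ws ⟨i.val, h⟩ else W', ?_, ?_, ?_, ?_, ?_⟩
      · intro i
        by_cases h : i.val < m <;> simp only [h, dif_pos, dif_neg, not_false_iff]
        · exact hTcard _
        · simpa using hT'card
      · intro i j hij
        by_cases hi : i.val < m <;> by_cases hj : j.val < m <;>
          simp only [hi, hj, dif_pos, dif_neg, not_false_iff]
        · refine hdisj ⟨i.val, hi⟩ ⟨j.val, hj⟩ fun h => hij ?_
          exact Fin.ext (Fin.mk_eq_mk.mp h)
        · exact hdisj' _
        · exact (hdisj' _).symm
        · exfalso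
          apply hij
          have := i.isLt
          have := j.isLt
          apply Fin.ext
          omega
      · intro i
        by_cases h : i.val < m <;> simp only [h, dif_pos, dif_neg, not_false_iff]
        · exact hWcard _
        · exact hW'card
      · intro i s
        by_cases h : i.val < m <;> simp only [h, dif_pos, dif_neg, not_false_iff]
        · exact hchar _ s
        · exact hchar' s
      · intro i s
        by_cases h : i.val < m <;> simp only [h, dif_pos, dif_neg, not_false_iff]
        · exact hWsub _ s
        · exact hW'sub s
  -- final contradiction
  obtain ⟨Ts, _, hTcard, hdisj, _, _, _⟩ := blocks (b + 2) le_rfl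
  have hcard : ((univ : Finset (Fin (b + 2))).biUnion Ts).card = (b + 2) * M' := by
    rw [Finset.card_biUnion (fun i _ j _ hij => hdisj i j hij)]
    rw [Finset.sum_congr rfl fun i _ => hTcard i, Finset.sum_const, smul_eq_mul,
      Finset.card_univ, Fintype.card_fin]
  have hle : ((univ : Finset (Fin (b + 2))).biUnion Ts).card ≤ N := by
    calc _ ≤ (univ : Finset (Fin N)).card := Finset.card_le_univ _
      _ = N := by rw [Finset.card_univ, Fintype.card_fin]
  rw [hcard, ← hNM'] at hle
  omega
end

section
/- Let F be a field, V an F-vector space (or F-module), and λ, k, K, r natural numbers with k ≤ λ. Let F₁ be a k × K matrix, F₂ a (λ−k) × K matrix, and S' a (λ−k) × (λ−k) matrix over F, and let F' be the λ × (K + λ − k) block matrix [F₁ 0; F₂ S'] (first k rows [F₁ | 0], last λ−k rows [F₂ | S']). Suppose D is a k × r matrix and S_A an r × λ matrix over F with D * S_A = [I_k | 0_{k×(λ−k)}]. Then for every w : Fin K → V and q : Fin (λ−k) → V, D ⬝ (S_A ⬝ (F' ⬝ (w ⊞ q))) = F₁ ⬝ w, where w ⊞ q denotes the concatenated vector in Fin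 (K + λ − k) → V and A ⬝ v denotes the vector i ↦ ∑_j A i j • v j. -/
/-- The action of a matrix `A` over `F` on a vector `v` with entries in an `F`-module:
`(A ⬝ v) i = ∑ j, A i j • v j`. -/
def matVecSMul {F V : Type*} [Semiring F] [AddCommMonoid V] [Module F V]
    {m n : Type*} [Fintype n] (A : Matrix m n F) (v : n → V) : m → V :=
  fun i => ∑ j, A i j • v j

lemma matVecSMul_mul {F V : Type*} [Semiring F] [AddCommMonoid V] [Module F V]
    {m n p : Type*} [Fintype n] [Fintype p] (A : Matrix m n F) (B : Matrix n p F)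
    (v : p → V) : matVecSMul (A * B) v = matVecSMul A (matVecSMul B v) := by
  funext i
  simp only [matVecSMul, Matrix.mul_apply, Finset.sum_smul, Finset.smul_sum, smul_smul]
  exact Finset.sum_comm

/-- Decodability core of Theorem 2: if `D * S_A = [I_k | 0]` then applying
`D` to the responding servers' answers in the secured scheme, whose encoding matrix is the
block matrix `F' = [F₁ 0; F₂ S']` applied to the concatenation of messages `w` and keys `q`,
recovers exactly `F₁ ⬝ w`, regardless of the keys. -/
theorem secure_scheme_decodable {F : Type*} [Field F]
    {V : Type*} [AddCommGroup V] [Module F V]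
    (lam k K r : ℕ) (hk : k ≤ lam)
    (F1 : Matrix (Fin k) (Fin K) F) (F2 : Matrix (Fin (lam - k)) (Fin K) F)
    (S' : Matrix (Fin (lam - k)) (Fin (lam - k)) F)
    (D : Matrix (Fin k) (Fin r) F)
    (SA : Matrix (Fin r) (Fin k ⊕ Fin (lam - k)) F)
    (hDS : D * SA =
      Matrix.fromCols (1 : Matrix (Fin k) (Fin k) F)
        (0 : Matrix (Fin k) (Fin (lam - k)) F)) :
    ∀ (w : Fin K → V) (q : Fin (lam - k) → V),
      matVecSMul D
        (matVecSMul SA (matVecSMul (Matrix.fromBlocks F1 0 F2 S') (Sum.elim w q))) =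
      matVecSMul F1 w := by
  intro w q
  rw [← matVecSMul_mul, ← matVecSMul_mul, hDS]
  funext i
  simp [matVecSMul, Matrix.mul_apply, Matrix.fromCols, Matrix.fromBlocks,
    Fintype.sum_sum_type, Matrix.one_apply, Finset.sum_ite_eq, Finset.smul_sum, smul_smul]
end

section
/- Let M and y be natural numbers with M odd and 2 * y + 1 ≤ M, and set N := 2 * M − y. Define I₀ := Finset.Icc 1 y, I₁ := Finset.Icc (y+1) M, I₂ := Finset.Icc (M+1) N. Let A ⊆ Finset.Icc 1 N with A.card = M − y + 1. Then at least one of the following holds: (a) 2 * (A ∩ I₁).card ≥ M + 3 − 2*y; (b) 2 * (A ∩ I₂).card ≥ M + 3 − 2*y; (c) I₀ ⊆ A, 2 * (A ∩ I₁).card = M + 1 − 2*y, and 2 * (A ∩ I₂).card = M + 1 − 2*y. -/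
/-- Case analysis for the decoding phase of Scheme 4 (with `N = 2M - y`,
`N_r = M - y + 1`): any set `A` of `M - y + 1` responding servers among `[1, N]` contains
at least `(M+3)/2 - y` servers in `[y+1, M]`, or at least `(M+3)/2 - y` servers in
`[M+1, N]`, or it contains all of `[1, y]` and exactly `(M+1)/2 - y` servers in each of
`[y+1, M]` and `[M+1, N]`. -/
theorem scheme4_decoding_cases (M y : ℕ) (hodd : Odd M) (hy : 2 * y + 1 ≤ M)
    (A : Finset ℕ) (hA : A ⊆ Finset.Icc 1 (2 * M - y)) (hcard : A.card = M - y + 1) :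
    2 * (A ∩ Finset.Icc (y + 1) M).card ≥ M + 3 - 2 * y ∨
    2 * (A ∩ Finset.Icc (M + 1) (2 * M - y)).card ≥ M + 3 - 2 * y ∨
    (Finset.Icc 1 y ⊆ A ∧
      2 * (A ∩ Finset.Icc (y + 1) M).card = M + 1 - 2 * y ∧
      2 * (A ∩ Finset.Icc (M + 1) (2 * M - y)).card = M + 1 - 2 * y) := by
  obtain ⟨k, hk⟩ := hodd
  have hA' : A = (A ∩ Finset.Icc 1 y) ∪ (A ∩ Finset.Icc (y + 1) M) ∪
      (A ∩ Finset.Icc (M + 1) (2 * M - y)) := by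
    ext x
    simp only [Finset.mem_union, Finset.mem_inter, Finset.mem_Icc]
    constructor
    · intro hx
      have h2 := Finset.mem_Icc.mp (hA hx)
      rcases le_or_gt x y with h | h
      · exact Or.inl (Or.inl ⟨hx, h2.1, h⟩)
      · rcases le_or_gt x M with h' | h'
        · exact Or.inl (Or.inr ⟨hx, by omega, h'⟩)
        · exact Or.inr ⟨hx, by omega, h2.2⟩
    · rintro ((⟨h, _⟩ | ⟨h, _⟩) | ⟨h, _⟩) <;> exact h
  have hd1 : Disjoint (A ∩ Finset.Icc 1 y) (A ∩ Finset.Icc (y + 1) M) := by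
    rw [Finset.disjoint_left]
    intro x hx hx'
    simp only [Finset.mem_inter, Finset.mem_Icc] at hx hx'
    omega
  have hd2 : Disjoint ((A ∩ Finset.Icc 1 y) ∪ (A ∩ Finset.Icc (y + 1) M))
      (A ∩ Finset.Icc (M + 1) (2 * M - y)) := by
    rw [Finset.disjoint_left]
    intro x hx hx'
    simp only [Finset.mem_union, Finset.mem_inter, Finset.mem_Icc] at hx hx'
    omega
  have hcard3 : (A ∩ Finset.Icc 1 y).card + (A ∩ Finset.Icc (y + 1) M).card +
      (A ∩ Finset.Icc (M + 1) (2 * M - y)).card = M - y + 1 := by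
    rw [← hcard]
    conv_rhs => rw [hA']
    rw [Finset.card_union_of_disjoint hd2, Finset.card_union_of_disjoint hd1]
  have ha : (A ∩ Finset.Icc 1 y).card ≤ y := by
    calc (A ∩ Finset.Icc 1 y).card ≤ (Finset.Icc 1 y).card :=
          Finset.card_le_card Finset.inter_subset_right
      _ = y := by simp
  by_cases hb2 : 2 * (A ∩ Finset.Icc (y + 1) M).card ≥ M + 3 - 2 * y
  · exact Or.inl hb2
  by_cases hc2 : 2 * (A ∩ Finset.Icc (M + 1) (2 * M - y)).card ≥ M + 3 - 2 * y
  · exact Or.inr (Or.inl hc2)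
  refine Or.inr (Or.inr ⟨?_, by omega, by omega⟩)
  have haeq : (A ∩ Finset.Icc 1 y).card = y := by omega
  have heq : A ∩ Finset.Icc 1 y = Finset.Icc 1 y := by
    apply Finset.eq_of_subset_of_card_le Finset.inter_subset_right
    simp [haeq]
  intro x hx
  rw [← heq] at hx
  exact (Finset.mem_inter.mp hx).1
end

section
/- Define h : ℕ → ℕ → ℕ on pairs (N, M) with 1 ≤ M ≤ N by the following recursion (well-founded since the first argument strictly decreases in every recursive call): letting g := Nat.gcd N M, (i) if g > 1 then h(N, M) = h(N/g, M/g); otherwise (g = 1): (ii) if M = 1 then h(N, M) = N; (iii) else if N ≥ 2*M then h(N, M) = h(N − (N/M − 1)*M, M) + (N/M − 1) (floor division); (iv) else if 2*N ≥ 3*M and M is even then h(N, M) = h(N − M, M/2) + 1; (v) else if 2*N ≥ 3*M and M is odd then h(N, M) = N − (3*M − 5)/2; (vi) else (M < N < 1.5*M) h(N, M) = h(M, 2*M − N). Then for all N, M with 1 ≤ M ≤ N, one has h(N, M) ≤ N − M + 1. -/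
/-- The number `h(N, M)` of totally transmitted linearly independent combinations in the
combined scheme of Theorem 6, defined by the recursion of Fig. 2 on pairs `(N, M)` with
`1 ≤ M ≤ N` (outside this domain the value is irrelevant and set to `0`; within the
domain the guard never fires on recursive calls). -/
def combinedSchemeH (N M : ℕ) : ℕ :=
  if hdom : M = 0 ∨ N < M then 0
  else if hg : 1 < Nat.gcd N M then
    combinedSchemeH (N / Nat.gcd N M) (M / Nat.gcd N M)
  else if hm1 : M = 1 then N
  else if h2 : 2 * M ≤ N then
    combinedSchemeH (N - (N / M - 1) * M) M + (N / M - 1)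
  else if h3 : 3 * M ≤ 2 * N ∧ Even M then
    combinedSchemeH (N - M) (M / 2) + 1
  else if h4 : 3 * M ≤ 2 * N ∧ Odd M then
    N - (3 * M - 5) / 2
  else
    combinedSchemeH M (2 * M - N)
termination_by N
decreasing_by
  · exact Nat.div_lt_self (by omega) hg
  · have hq : 2 ≤ N / M := (Nat.le_div_iff_mul_le (by omega : 0 < M)).2 (by omega)
    have hpos : 0 < (N / M - 1) * M := Nat.mul_pos (by omega) (by omega)
    omega
  · omega
  · have hgcd1 : Nat.gcd N M = 1 := by
      have hpos : 0 < Nat.gcd N M := Nat.gcd_pos_of_pos_right N (by omega)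
      omega
    have hne : N ≠ M := by
      intro he
      rw [he, Nat.gcd_self] at hgcd1
      omega
    omega

lemma combinedSchemeH_le_aux : ∀ N M : ℕ, 1 ≤ M → M ≤ N → combinedSchemeH N M ≤ N - M + 1 := by
  intro N
  induction N using Nat.strong_induction_on with
  | _ N ih =>
  intro M hM hMN
  rw [combinedSchemeH]
  split_ifs with hdom hg hm1 h2 h3 h4
  · omega
  · -- gcd case
    set g := Nat.gcd N M with hgdef
    have hgN : g ∣ N := Nat.gcd_dvd_left N M
    have hgM : g ∣ M := Nat.gcd_dvd_right N M
    obtain ⟨a, ha⟩ := hgN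
    obtain ⟨b, hb⟩ := hgM
    have hgpos : 0 < g := by omega
    have haN : N / g = a := by rw [ha]; exact Nat.mul_div_cancel_left a hgpos
    have hbM : M / g = b := by rw [hb]; exact Nat.mul_div_cancel_left b hgpos
    rw [haN, hbM]
    have hb1 : 1 ≤ b := by nlinarith
    have hab : b ≤ a := by nlinarith
    have h1 := ih a (by nlinarith) b hb1 hab
    have h2 : a - b + g * b ≤ g * a := by
      calc a - b + g * b ≤ g * (a - b) + g * b := by
            have := Nat.le_mul_of_pos_left (a - b) hgpos
            omega
        _ = g * (a - b + b) := by ring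
        _ = g * a := by rw [Nat.sub_add_cancel hab]
    omega
  · omega
  · -- N ≥ 2M
    have hM2 : 2 ≤ M := by omega
    have hdm := Nat.div_add_mod N M
    have hmod : N % M < M := Nat.mod_lt N (by omega)
    have e1 : (N / M - 1) * M = N / M * M - 1 * M := Nat.sub_mul _ _ _
    rw [one_mul] at e1
    have hdm2 : N / M * M + N % M = N := by rw [Nat.mul_comm] at hdm; exact hdm
    have hXM : M ≤ N / M * M := by omega
    have e2 : N - (N / M - 1) * M = M + N % M := by omega
    rw [e2]
    have hIH := ih (M + N % M) (by omega) M hM (by omega)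
    have hmul : (N / M - 1) * 1 ≤ (N / M - 1) * M := Nat.mul_le_mul_left _ hM
    omega
  · -- even case
    obtain ⟨h3a, hE⟩ := h3
    obtain ⟨k, hk⟩ := hE
    have hk1 : 1 ≤ k := by omega
    have hM2 : M / 2 = k := by omega
    rw [hM2]
    have hIH := ih (N - M) (by omega) k hk1 (by omega)
    omega
  · -- odd case
    obtain ⟨h4a, hO⟩ := h4
    obtain ⟨k, hk⟩ := hO
    omega
  · -- M < N < 1.5M
    have h2N : 2 * N < 3 * M := by
      rcases Nat.even_or_odd M with hE | hO
      · by_contra hc; exact h3 ⟨by omega, hE⟩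
      · by_contra hc; exact h4 ⟨by omega, hO⟩
    have hNM : M < N := by
      rcases Nat.lt_or_ge M N with h | h
      · exact h
      · have heq : N = M := by omega
        rw [heq, Nat.gcd_self] at hg
        omega
    have hIH := ih M hNM (2 * M - N) (by omega) (by omega)
    omega


/-- The randomness count of the combined scheme never exceeds that of the
cyclic-assignment scheme: `h(N, M) ≤ N - M + 1` for all `1 ≤ M ≤ N`. -/
theorem combinedSchemeH_le (N M : ℕ) (hM : 1 ≤ M) (hMN : M ≤ N) :
    combinedSchemeH N M ≤ N - M + 1 :=
  combinedSchemeH_le_aux N M hM hMN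
end

section
/- Define h : ℕ → ℕ → ℕ on pairs (N, M) with 1 ≤ M ≤ N by the following recursion: letting g := Nat.gcd N M, (i) if g > 1 then h(N, M) = h(N/g, M/g); otherwise (g = 1): (ii) if M = 1 then h(N, M) = N; (iii) else if N ≥ 2*M then h(N, M) = h(N − (N/M − 1)*M, M) + (N/M − 1) (floor division); (iv) else if 2*N ≥ 3*M and M is even then h(N, M) = h(N − M, M/2) + 1; (v) else if 2*N ≥ 3*M and M is odd then h(N, M) = N − (3*M − 5)/2; (vi) else (M < N < 1.5*M) h(N, M) = h(M, 2*M − N). Then for all N, M with 1 ≤ M ≤ N and M / Nat.gcd N M ≤ 4, one has: h(N, M) = ⌈N/M⌉ + 1 if M / Nat.gcd N M ≥ 3 and (N / Nat.gcd N M) mod (M / Nat.gcd N M) = M / Nat.gcd N M − 1, and h(N, M) = ⌈N/M⌉ otherwise, where ⌈N/M⌉ = (N + M − 1)/M. -/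
lemma hb11 : combinedSchemeH 1 1 = 1 := by rw [combinedSchemeH]; norm_num
lemma hb32 : combinedSchemeH 3 2 = 2 := by rw [combinedSchemeH]; norm_num; rw [hb11]
lemma hb43 : combinedSchemeH 4 3 = 2 := by rw [combinedSchemeH]; norm_num; rw [hb32]
lemma hb53 : combinedSchemeH 5 3 = 3 := by rw [combinedSchemeH]; norm_num [Nat.even_iff, Nat.odd_iff]
lemma hb54 : combinedSchemeH 5 4 = 2 := by rw [combinedSchemeH]; norm_num; rw [hb43]
lemma hb74 : combinedSchemeH 7 4 = 3 := by rw [combinedSchemeH]; norm_num [Nat.even_iff]; rw [hb32]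

lemma key (N M : ℕ) (hM : 1 ≤ M) (hMN : M ≤ N) (hcop : Nat.gcd N M = 1) (hle : M ≤ 4) :
    combinedSchemeH N M =
      if 3 ≤ M ∧ N % M = M - 1 then (N + M - 1) / M + 1 else (N + M - 1) / M := by
  have hmod : Nat.gcd (N % M) M = 1 := by rw [← Nat.gcd_rec, Nat.gcd_comm]; exact hcop
  interval_cases M
  · -- M = 1
    rw [combinedSchemeH, dif_neg (by omega : ¬(1 = 0 ∨ N < 1)), hcop,
      dif_neg (by norm_num), dif_pos rfl, if_neg (by omega)]
    omega
  · -- M = 2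
    have hr : N % 2 = 1 := by
      rcases (by omega : N % 2 = 0 ∨ N % 2 = 1) with h | h
      · rw [h] at hmod; simp at hmod
      · exact h
    rw [if_neg (by omega)]
    by_cases hbig : 4 ≤ N
    · rw [combinedSchemeH, dif_neg (by omega : ¬(2 = 0 ∨ N < 2)), hcop,
        dif_neg (by norm_num), dif_neg (by norm_num), dif_pos hbig]
      have harg : N - (N / 2 - 1) * 2 = 3 := by omega
      rw [harg, hb32]; omega
    · have hN3 : N = 3 := by omega
      subst hN3; rw [hb32]
  · -- M = 3
    have hr : N % 3 = 1 ∨ N % 3 = 2 := by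
      rcases (by omega : N % 3 = 0 ∨ N % 3 = 1 ∨ N % 3 = 2) with h | h | h
      · rw [h] at hmod; simp at hmod
      · exact Or.inl h
      · exact Or.inr h
    by_cases hbig : 6 ≤ N
    · rw [combinedSchemeH, dif_neg (by omega : ¬(3 = 0 ∨ N < 3)), hcop,
        dif_neg (by norm_num), dif_neg (by norm_num), dif_pos hbig]
      rcases hr with h | h
      · have harg : N - (N / 3 - 1) * 3 = 4 := by omega
        rw [harg, hb43, if_neg (by omega)]; omega
      · have harg : N - (N / 3 - 1) * 3 = 5 := by omega
        rw [harg, hb53, if_pos (by omega)]; omega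
    · rcases hr with h | h
      · have hN : N = 4 := by omega
        subst hN; rw [hb43, if_neg (by omega)]
      · have hN : N = 5 := by omega
        subst hN; rw [hb53, if_pos (by omega)]
  · -- M = 4
    have hr : N % 4 = 1 ∨ N % 4 = 3 := by
      rcases (by omega : N % 4 = 0 ∨ N % 4 = 1 ∨ N % 4 = 2 ∨ N % 4 = 3) with h | h | h | h
      · rw [h] at hmod; simp at hmod
      · exact Or.inl h
      · rw [h] at hmod; exact absurd hmod (by decide)
      · exact Or.inr h
    by_cases hbig : 8 ≤ N
    · rw [combinedSchemeH, dif_neg (by omega : ¬(4 = 0 ∨ N < 4)), hcop,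
        dif_neg (by norm_num), dif_neg (by norm_num), dif_pos hbig]
      rcases hr with h | h
      · have harg : N - (N / 4 - 1) * 4 = 5 := by omega
        rw [harg, hb54, if_neg (by omega)]; omega
      · have harg : N - (N / 4 - 1) * 4 = 7 := by omega
        rw [harg, hb74, if_pos (by omega)]; omega
    · rcases hr with h | h
      · have hN : N = 5 := by omega
        subst hN; rw [hb54, if_neg (by omega)]
      · have hN : N = 7 := by omega
        subst hN; rw [hb74, if_pos (by omega)]

lemma lt_div_succ_mul (a b : ℕ) (hb : 0 < b) : a < (a / b + 1) * b := by
  have h1 := Nat.div_add_mod a b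
  have h2 := Nat.mod_lt a hb
  have h3 : (a / b + 1) * b = b * (a / b) + b := by ring
  omega

lemma div_aux (g N' M' : ℕ) (hg : 1 ≤ g) (hM : 1 ≤ M') (hN : 1 ≤ N') :
    (g * N' - 1) / (g * M') = (N' - 1) / M' := by
  apply Nat.div_eq_of_lt_le
  · have h1 : (N' - 1) / M' * M' ≤ N' - 1 := Nat.div_mul_le_self _ _
    have e1 : (N' - 1) / M' * (g * M') = g * ((N' - 1) / M' * M') := by ring
    have h2 : g * ((N' - 1) / M' * M') ≤ g * (N' - 1) := Nat.mul_le_mul_left g h1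
    have e2 : g * (N' - 1) = g * N' - g := Nat.mul_pred g N'
    have h3 : 1 ≤ g * N' := Nat.one_le_iff_ne_zero.mpr (by positivity)
    omega
  · have h4 : N' - 1 < ((N' - 1) / M' + 1) * M' := lt_div_succ_mul _ _ (by omega)
    have h5 : N' ≤ ((N' - 1) / M' + 1) * M' := by omega
    have h6 : g * N' ≤ g * (((N' - 1) / M' + 1) * M') := Nat.mul_le_mul_left g h5
    have e3 : ((N' - 1) / M' + 1) * (g * M') = g * (((N' - 1) / M' + 1) * M') := by ring
    have h3 : 1 ≤ g * N' := Nat.one_le_iff_ne_zero.mpr (by positivity)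
    omega

lemma ceil_aux (g N' M' : ℕ) (hg : 1 ≤ g) (hM : 1 ≤ M') (hN : 1 ≤ N') :
    (g * N' + g * M' - 1) / (g * M') = (N' + M' - 1) / M' := by
  have h3 : 1 ≤ g * N' := Nat.one_le_iff_ne_zero.mpr (by positivity)
  have h4 : 1 ≤ g * M' := Nat.one_le_iff_ne_zero.mpr (by positivity)
  have e1 : g * N' + g * M' - 1 = g * N' - 1 + g * M' := by omega
  have e2 : N' + M' - 1 = N' - 1 + M' := by omega
  rw [e1, e2, Nat.add_div_right _ (by omega), Nat.add_div_right _ (by omega),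
    div_aux g N' M' hg hM hN]

/-- Evaluation of `h(N, M)` when `M / gcd(N, M) ≤ 4` (Theorem 7):
`h(N, M) = ⌈N/M⌉ + 1` if `M/gcd ≥ 3` and `(N/gcd) mod (M/gcd) = M/gcd - 1`, and
`h(N, M) = ⌈N/M⌉` otherwise, where `⌈N/M⌉ = (N + M - 1)/M`. -/
theorem combinedSchemeH_eval (N M : ℕ) (hM : 1 ≤ M) (hMN : M ≤ N)
    (h4 : M / Nat.gcd N M ≤ 4) :
    combinedSchemeH N M =
      if 3 ≤ M / Nat.gcd N M ∧
          (N / Nat.gcd N M) % (M / Nat.gcd N M) = M / Nat.gcd N M - 1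
      then (N + M - 1) / M + 1
      else (N + M - 1) / M := by
  have hgpos : 0 < Nat.gcd N M := Nat.gcd_pos_of_pos_right N (by omega)
  obtain ⟨N', hN'⟩ := Nat.gcd_dvd_left N M
  obtain ⟨M', hM'⟩ := Nat.gcd_dvd_right N M
  have hNg : N / Nat.gcd N M = N' := Nat.div_eq_of_eq_mul_left hgpos (hN'.trans (Nat.mul_comm _ _))
  have hMg : M / Nat.gcd N M = M' := Nat.div_eq_of_eq_mul_left hgpos (hM'.trans (Nat.mul_comm _ _))
  have hcop' : Nat.gcd N' M' = 1 := by
    rw [← hNg, ← hMg]; exact Nat.coprime_div_gcd_div_gcd hgpos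
  have hM'1 : 1 ≤ M' := by rw [← hMg]; exact Nat.div_pos (Nat.le_of_dvd (by omega) ⟨M', hM'⟩) hgpos
  have hN'1 : M' ≤ N' := by rw [← hNg, ← hMg]; exact Nat.div_le_div_right hMN
  have h4' : M' ≤ 4 := by rw [← hMg]; exact h4
  have hkey := key N' M' hM'1 hN'1 hcop' h4'
  have hceil : (N' + M' - 1) / M' = (N + M - 1) / M := by
    have hc := ceil_aux (Nat.gcd N M) N' M' hgpos hM'1 (by omega)
    rw [← hN', ← hM'] at hc
    exact hc.symm
  have hLHS : combinedSchemeH N M = combinedSchemeH N' M' := by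
    by_cases h1 : 1 < Nat.gcd N M
    · rw [combinedSchemeH, dif_neg (by omega : ¬(M = 0 ∨ N < M)), dif_pos h1, hNg, hMg]
    · have hg1 : Nat.gcd N M = 1 := by omega
      rw [hg1, one_mul] at hN' hM'
      rw [hN', hM']
  rw [hNg, hMg, hLHS, hkey]
  simp only [hceil]
end
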